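/- Every faithful action of G₃₅₁ on a set with exactly 27 elements is transitive: if X is a finite type with 27 elements and φ : G₃₅₁ → Equiv.Perm X is an injective group homomorphism, then the induced action of G₃₅₁ on X is transitive. -/

import Mathlib

/-- `F₂₇`, a finite field with 27 elements. -/
abbrev F27 : Type := GaloisField 3 3

/-- `a` is a nonzero square in `F₂₇`. -/
def IsNonzeroSquare (a : F27) : Prop := a ≠ 0 ∧ ∃ c : F27, a = c ^ 2

/-- The set of affine permutations `x ↦ a·x + b` with `a` a nonzero square. -/
def affineSet : Set (Equiv.Perm F27) :=
  { g | ∃ a b : F27, IsNonzeroSquare a ∧ ∀ x : F27, g x = a * x + b }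

noncomputable instance : Fintype F27 := Fintype.ofFinite _
noncomputable instance : Fintype F27ˣ := Fintype.ofFinite _

lemma F27_card : Fintype.card F27 = 27 := by
  have := GaloisField.card (p := 3) (n := 3) (by norm_num)
  rw [Nat.card_eq_fintype_card] at this
  norm_num at this ⊢
  exact this

lemma isNonzeroSquare_iff (a : F27) : IsNonzeroSquare a ↔ a ^ 13 = 1 := by
  constructor
  · rintro ⟨h0, c, rfl⟩
    have hc : c ≠ 0 := by rintro rfl; simp at h0
    have := FiniteField.pow_card_sub_one_eq_one c hc
    rw [F27_card] at this
    rw [← pow_mul]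
    norm_num
    exact this
  · intro h
    refine ⟨fun h0 => by simp [h0] at h, a ^ 7, ?_⟩
    rw [← pow_mul]
    norm_num
    calc a = a ^ 13 * a := by rw [h, one_mul]
    _ = a ^ 14 := by ring

lemma ne_zero_of_root13 {a : F27} (h : a ^ 13 = 1) : a ≠ 0 := by
  rintro rfl; simp at h

/-- the affine permutation x ↦ a x + b -/
noncomputable def mkAff (a b : F27) (ha : a ≠ 0) : Equiv.Perm F27 :=
  (Equiv.mulLeft₀ a ha).trans (Equiv.addRight b)

lemma mkAff_apply (a b : F27) (ha : a ≠ 0) (x : F27) : mkAff a b ha x = a * x + b := rfl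

lemma card_root13 : Nat.card {a : F27 // a ^ 13 = 1} = 13 := by
  haveI : Fact (Nat.Prime 13) := ⟨by norm_num⟩
  obtain ⟨u, hu⟩ := exists_prime_orderOf_dvd_card (G := F27ˣ) 13
    (by rw [Fintype.card_eq_nat_card, Nat.card_units, Nat.card_eq_fintype_card, F27_card]; norm_num)
  have horder : orderOf ((u : F27)) = 13 := by rw [orderOf_units, hu]
  have hprim : IsPrimitiveRoot ((u : F27)) 13 := horder ▸ IsPrimitiveRoot.orderOf (u : F27)
  have e : {a : F27 // a ^ 13 = 1} ≃ {a : F27 // a ∈ Polynomial.nthRootsFinset 13 (1 : F27)} :=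
    Equiv.subtypeEquivRight (fun a => by rw [Polynomial.mem_nthRootsFinset (by norm_num) (1 : F27)])
  rw [Nat.card_congr e, Nat.card_eq_fintype_card, Fintype.card_coe, hprim.card_nthRootsFinset]

section
variable {G : Subgroup (Equiv.Perm F27)}

noncomputable def Amap (g : G) : F27 := g.1 1 - g.1 0

lemma Amap_spec (hG : (G : Set (Equiv.Perm F27)) = affineSet) (g : G) :
    ∀ x : F27, g.1 x = Amap g * x + g.1 0 := by
  have hg : g.1 ∈ affineSet := hG ▸ g.2
  obtain ⟨a, b, _, hab⟩ := hg
  have h0 : g.1 0 = b := by rw [hab 0]; ring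
  have hA : Amap g = a := by rw [Amap, hab 1, hab 0]; ring
  intro x
  rw [hab x, hA, h0]

lemma Amap_sq (hG : (G : Set (Equiv.Perm F27)) = affineSet) (g : G) :
    (Amap g) ^ 13 = 1 := by
  have hg : g.1 ∈ affineSet := hG ▸ g.2
  obtain ⟨a, b, ha, hab⟩ := hg
  have hA : Amap g = a := by rw [Amap, hab 1, hab 0]; ring
  rw [hA]
  exact (isNonzeroSquare_iff a).1 ha

lemma Amap_mul (hG : (G : Set (Equiv.Perm F27)) = affineSet) (g h : G) :
    Amap (g * h) = Amap g * Amap h := by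
  have h1 : (g * h).1 1 = g.1 (h.1 1) := rfl
  have h0 : (g * h).1 0 = g.1 (h.1 0) := rfl
  rw [Amap, h1, h0, Amap_spec hG g (h.1 1), Amap_spec hG g (h.1 0)]
  rw [show Amap h = h.1 1 - h.1 0 from rfl]
  ring

lemma Amap_pow_apply (hG : (G : Set (Equiv.Perm F27)) = affineSet) (g : G) (n : ℕ) (x : F27) :
    (g ^ n).1 x = (Amap g) ^ n * x + (∑ i ∈ Finset.range n, (Amap g) ^ i) * g.1 0 := by
  induction n generalizing x with
  | zero => simp
  | succ n ih =>
    have h1 : (g ^ (n + 1)).1 x = (g ^ n).1 (g.1 x) := by rw [pow_succ]; rfl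
    rw [h1, Amap_spec hG g x, ih, Finset.sum_range_succ]
    ring

lemma pow13_eq_one (hG : (G : Set (Equiv.Perm F27)) = affineSet) (g : G)
    (hg : Amap g ≠ 1) : g ^ 13 = 1 := by
  have ha : (Amap g) ^ 13 = 1 := Amap_sq hG g
  have hsum : (∑ i ∈ Finset.range 13, (Amap g) ^ i) = 0 := by
    rw [geom_sum_eq hg, ha, sub_self, zero_div]
  ext1
  apply Equiv.ext
  intro x
  rw [show ((g ^ 13 : G) : Equiv.Perm F27) x = (g ^ 13).1 x from rfl,
    Amap_pow_apply hG g 13 x, ha, hsum]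
  simp

lemma Amap_one : Amap (1 : G) = 1 := by simp [Amap]

lemma mkAff_mem (hG : (G : Set (Equiv.Perm F27)) = affineSet) {a : F27} (b : F27)
    (ha : a ^ 13 = 1) : mkAff a b (ne_zero_of_root13 ha) ∈ G := by
  have : mkAff a b (ne_zero_of_root13 ha) ∈ affineSet :=
    ⟨a, b, (isNonzeroSquare_iff a).2 ha, fun x => rfl⟩
  rw [← SetLike.mem_coe, hG]
  exact this

/-- bijection between G and roots × F27 -/
noncomputable def gEquiv (hG : (G : Set (Equiv.Perm F27)) = affineSet) :
    G ≃ {a : F27 // a ^ 13 = 1} × F27 where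
  toFun g := (⟨Amap g, Amap_sq hG g⟩, g.1 0)
  invFun p := ⟨mkAff p.1.1 p.2 (ne_zero_of_root13 p.1.2), mkAff_mem hG p.2 p.1.2⟩
  left_inv g := by
    ext x
    rw [show ((⟨mkAff _ _ _, _⟩ : G) : Equiv.Perm F27) x = mkAff (Amap g) (g.1 0)
      (ne_zero_of_root13 (Amap_sq hG g)) x from rfl, mkAff_apply, ← Amap_spec hG g x]
  right_inv p := by
    refine Prod.ext (Subtype.ext ?_) ?_
    · show Amap _ = p.1.1
      rw [show Amap (⟨mkAff p.1.1 p.2 _, _⟩ : G) =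
        mkAff p.1.1 p.2 (ne_zero_of_root13 p.1.2) 1 - mkAff p.1.1 p.2 (ne_zero_of_root13 p.1.2) 0
        from rfl, mkAff_apply, mkAff_apply]
      ring
    · show mkAff p.1.1 p.2 (ne_zero_of_root13 p.1.2) 0 = p.2
      rw [mkAff_apply]
      ring

lemma card_G (hG : (G : Set (Equiv.Perm F27)) = affineSet) : Nat.card G = 351 := by
  rw [Nat.card_congr (gEquiv hG), Nat.card_prod, card_root13,
    Nat.card_eq_fintype_card, F27_card]

lemma card_T (hG : (G : Set (Equiv.Perm F27)) = affineSet) :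
    Nat.card {g : G // Amap g = 1} = 27 := by
  have e : {g : G // Amap g = 1} ≃ F27 := by
    refine Equiv.ofBijective (fun g => g.1.1 0) ⟨?_, ?_⟩
    · rintro ⟨g, hg⟩ ⟨h, hh⟩ hb
      simp only at hb
      refine Subtype.ext (Subtype.ext (Equiv.ext fun x => ?_))
      rw [Amap_spec hG g x, Amap_spec hG h x, hg, hh, hb]
    · intro b
      refine ⟨⟨⟨mkAff 1 b one_ne_zero, mkAff_mem hG b (one_pow 13)⟩, ?_⟩, ?_⟩
      · show mkAff 1 b one_ne_zero 1 - mkAff 1 b one_ne_zero 0 = 1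
        rw [mkAff_apply, mkAff_apply]; ring
      · show mkAff 1 b one_ne_zero 0 = b
        rw [mkAff_apply]; ring
  rw [Nat.card_congr e, Nat.card_eq_fintype_card, F27_card]

lemma exists_c (hG : (G : Set (Equiv.Perm F27)) = affineSet) : ∃ c : G, Amap c ≠ 1 := by
  haveI : Fact (Nat.Prime 13) := ⟨by norm_num⟩
  obtain ⟨u, hu⟩ := exists_prime_orderOf_dvd_card (G := F27ˣ) 13
    (by rw [Fintype.card_eq_nat_card, Nat.card_units, Nat.card_eq_fintype_card, F27_card]; norm_num)
  have horder : orderOf ((u : F27)) = 13 := by rw [orderOf_units, hu]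
  have hu13 : (u : F27) ^ 13 = 1 := by rw [← horder]; exact pow_orderOf_eq_one _
  have hune : (u : F27) ≠ 1 := by
    intro h
    rw [orderOf_eq_one_iff.2 h] at horder
    norm_num at horder
  refine ⟨⟨mkAff u 0 (ne_zero_of_root13 hu13), mkAff_mem hG 0 hu13⟩, fun h => hune ?_⟩
  have hA : Amap (⟨mkAff u 0 (ne_zero_of_root13 hu13), mkAff_mem hG 0 hu13⟩ : G) = (u : F27) := by
    show mkAff (u : F27) 0 (ne_zero_of_root13 hu13) 1 -
      mkAff (u : F27) 0 (ne_zero_of_root13 hu13) 0 = (u : F27)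
    rw [mkAff_apply, mkAff_apply]; ring
  rw [hA] at h
  exact h


/-- Every faithful action of `G₃₅₁` on a set with 27 elements is transitive. -/
theorem statement10 (G : Subgroup (Equiv.Perm F27))
    (hG : (G : Set (Equiv.Perm F27)) = affineSet)
    (X : Type*) [Finite X] (hX : Nat.card X = 27)
    (φ : G →* Equiv.Perm X) (hφ : Function.Injective φ) :
    ∀ x y : X, ∃ g : G, φ g x = y := by
  classical
  letI : MulAction G X := MulAction.compHom X φ
  have hsmul : ∀ (g : G) (x : X), g • x = φ g x := fun _ _ => rfl
  letI : Fintype X := Fintype.ofFinite X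
  letI : Fintype G := Fintype.ofFinite G
  by_cases hbig : ∃ z : X, MulAction.orbit G z = Set.univ
  · obtain ⟨z, hz⟩ := hbig
    intro x y
    have hx : x ∈ MulAction.orbit G z := hz ▸ Set.mem_univ x
    have hy : y ∈ MulAction.orbit G z := hz ▸ Set.mem_univ y
    obtain ⟨g, hg⟩ := hx
    obtain ⟨h, hh⟩ := hy
    refine ⟨h * g⁻¹, ?_⟩
    rw [← hsmul, mul_smul, ← hg, inv_smul_smul]
    exact hh
  · exfalso
    have hfix : ∀ (t : G), Amap t = 1 → ∀ x : X, t • x = x := by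
      intro t ht x
      letI : Fintype (MulAction.orbit G x) := (Set.toFinite _).fintype
      set d := Nat.card (MulAction.orbit G x) with hd
      clear_value d
      have hOS := MulAction.card_orbit_mul_card_stabilizer_eq_card_group G x
      rw [← Nat.card_eq_fintype_card, ← Nat.card_eq_fintype_card,
        ← Nat.card_eq_fintype_card, card_G hG, ← hd] at hOS
      have hdvd : d ∣ 351 := ⟨_, hOS.symm⟩
      have hle : d ≤ 27 := by
        rw [hd, Nat.card_eq_fintype_card]
        calc Fintype.card (MulAction.orbit G x) ≤ Fintype.card X :=
          Fintype.card_le_of_injective _ Subtype.val_injective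
        _ = 27 := by rw [← Nat.card_eq_fintype_card, hX]
      have hmem : d ∈ Nat.divisors 351 := Nat.mem_divisors.2 ⟨hdvd, by norm_num⟩
      -- rule out d ∈ {3, 9} (indeed any 2 ≤ d ≤ 12)
      have hnotmid : ¬(2 ≤ d ∧ d ≤ 12) := by
        rintro ⟨hd2, hd12⟩
        have hstab : ∀ g : G, Amap g ≠ 1 → g ∈ MulAction.stabilizer G x := by
          intro g hg
          have h13 : g ^ 13 = 1 := pow13_eq_one hG g hg
          set ψ := MulAction.toPermHom G (MulAction.orbit G x) with hψ
          have h1 : (ψ g) ^ 13 = 1 := by rw [← map_pow, h13, map_one]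
          have h2 : orderOf (ψ g) ∣ 13 := orderOf_dvd_of_pow_eq_one h1
          have h3 : orderOf (ψ g) ∣ Nat.card (Equiv.Perm (MulAction.orbit G x)) :=
            orderOf_dvd_natCard _
          have h4 : Nat.card (Equiv.Perm (MulAction.orbit G x)) = Nat.factorial d := by
            rw [Nat.card_eq_fintype_card, Fintype.card_perm, hd, Nat.card_eq_fintype_card]
          have h5 : orderOf (ψ g) = 1 := by
            rcases (Nat.Prime.eq_one_or_self_of_dvd (by norm_num : Nat.Prime 13) _ h2)
              with h | h
            · exact h
            · exfalso
              rw [h, h4] at h3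
              have := (Nat.Prime.dvd_factorial (by norm_num : Nat.Prime 13)).1 h3
              omega
          have h6 : ψ g = 1 := orderOf_eq_one_iff.1 h5
          have h7 := congrArg (fun (e : Equiv.Perm (MulAction.orbit G x)) =>
            (e ⟨x, MulAction.mem_orbit_self x⟩ : X)) h6
          rw [MulAction.mem_stabilizer_iff]
          exact h7
        have htop : MulAction.stabilizer G x = ⊤ := by
          rw [eq_top_iff]
          intro t' _
          by_cases hA : Amap t' = 1
          · obtain ⟨c, hc⟩ := exists_c hG
            have h1 : Amap (t' * c⁻¹) * Amap c = 1 := by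
              rw [← Amap_mul hG, inv_mul_cancel_right, hA]
            have h2 : Amap (t' * c⁻¹) ≠ 1 := by
              intro h
              rw [h, one_mul] at h1
              exact hc h1
            have := mul_mem (hstab _ h2) (hstab c hc)
            rwa [inv_mul_cancel_right] at this
          · exact hstab t' hA
        have horb1 : MulAction.orbit G x = {x} := by
          apply Set.eq_singleton_iff_unique_mem.2 ⟨MulAction.mem_orbit_self x, ?_⟩
          rintro y ⟨g, rfl⟩
          exact (MulAction.mem_stabilizer_iff).1 (htop ▸ Subgroup.mem_top g)
        rw [hd, horb1] at hd2
        simp [Nat.card_coe_set_eq] at hd2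
      -- now d ∈ {1, 13, 27}
      have hdval : d = 1 ∨ d = 13 ∨ d = 27 := by
        clear hOS hd
        set_option maxRecDepth 4000 in
        fin_cases hmem <;> omega
      rcases hdval with h1 | h13 | h27
      · -- orbit is a singleton, so t fixes x
        obtain ⟨a, ha⟩ := Set.ncard_eq_one.mp
          (by rw [← Nat.card_coe_set_eq, ← hd, h1])
        have hxa : x = a := by
          have : x ∈ MulAction.orbit G x := MulAction.mem_orbit_self x
          rw [ha] at this
          exact this
        have : t • x ∈ MulAction.orbit G x := MulAction.mem_orbit x t
        rw [ha] at this
        rw [Set.mem_singleton_iff] at this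
        rw [this, hxa]
      · -- d = 13 : stabilizer is exactly the translations
        rw [h13] at hOS
        have hcs : Nat.card (MulAction.stabilizer G x) = 27 := by omega
        have hsub : (MulAction.stabilizer G x : Set G) ⊆ {g : G | Amap g = 1} := by
          intro g hgmem
          by_contra hA
          have h13' : g ^ 13 = 1 := pow13_eq_one hG g hA
          have hne : g ≠ 1 := fun h => hA (h ▸ Amap_one)
          have ho : orderOf g = 13 := by
            rcases (Nat.Prime.eq_one_or_self_of_dvd (by norm_num : Nat.Prime 13) _
              (orderOf_dvd_of_pow_eq_one h13')) with h | h
            · exact absurd (orderOf_eq_one_iff.1 h) hne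
            · exact h
          have hdvd27 : orderOf g ∣ 27 :=
            hcs ▸ Subgroup.orderOf_dvd_natCard _ hgmem
          rw [ho] at hdvd27
          norm_num at hdvd27
        have hset : (MulAction.stabilizer G x : Set G) = {g : G | Amap g = 1} := by
          apply Set.eq_of_subset_of_ncard_le hsub ?_ (Set.toFinite _)
          have e1 : ({g : G | Amap g = 1} : Set G).ncard = 27 := by
            rw [← Nat.card_coe_set_eq]
            exact card_T hG
          have e2 : ((MulAction.stabilizer G x : Set G)).ncard = 27 := by
            rw [← Nat.card_coe_set_eq]
            exact hcs
          rw [e1, e2]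
        have : t ∈ (MulAction.stabilizer G x : Set G) := by
          rw [hset]
          exact ht
        exact (MulAction.mem_stabilizer_iff).1 this
      · -- d = 27 : the orbit is everything, contradiction
        exfalso
        apply hbig
        refine ⟨x, Set.eq_of_subset_of_ncard_le (Set.subset_univ _) ?_ (Set.toFinite _)⟩
        rw [Set.ncard_univ, hX, ← Nat.card_coe_set_eq, ← hd, h27]
    -- get a nontrivial translation and contradict injectivity
    have hnontriv : Nontrivial {g : G // Amap g = 1} :=
      Finite.one_lt_card_iff_nontrivial.1 (by rw [card_T hG]; norm_num)
    obtain ⟨⟨t, ht⟩, hne⟩ := exists_ne (⟨1, Amap_one⟩ : {g : G // Amap g = 1})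
    have htne : t ≠ 1 := fun h => hne (Subtype.ext h)
    apply htne
    apply hφ
    rw [map_one]
    apply Equiv.ext
    intro x
    rw [← hsmul, hfix t ht x]
    rfl

end
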